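/- Let G be a finitely generated group acting pointwise periodically by homeomorphisms on a compact, totally disconnected metric space X. Then the action is equicontinuous. -/

import Mathlib

open Filter Set Topology

namespace Stmt13Aux

variable {G : Type*} [Group G]

/-- Words of length ≤ n over T. -/
def ball (T : Set G) (n : ℕ) : Set G :=
  {g | ∃ l : List G, l.length ≤ n ∧ (∀ a ∈ l, a ∈ T) ∧ l.prod = g}

lemma ball_mono {T : Set G} {m n : ℕ} (h : m ≤ n) : ball T m ⊆ ball T n := by
  rintro g ⟨l, hl, hT, rfl⟩; exact ⟨l, hl.trans h, hT, rfl⟩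

lemma one_mem_ball (T : Set G) (n : ℕ) : (1 : G) ∈ ball T n :=
  ⟨[], by simp, by simp, rfl⟩

lemma mul_mem_ball {T : Set G} {m n : ℕ} {u v : G} (hu : u ∈ ball T m) (hv : v ∈ ball T n) :
    u * v ∈ ball T (m + n) := by
  obtain ⟨l, hl, hT, rfl⟩ := hu
  obtain ⟨l', hl', hT', rfl⟩ := hv
  refine ⟨l ++ l', by simpa using Nat.add_le_add hl hl', ?_, by simp⟩
  intro a ha
  rcases List.mem_append.1 ha with h | h
  exacts [hT a h, hT' a h]

lemma inv_mem_ball {T : Set G} (hTsymm : ∀ a ∈ T, a⁻¹ ∈ T) {n : ℕ} {u : G}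
    (hu : u ∈ ball T n) : u⁻¹ ∈ ball T n := by
  obtain ⟨l, hl, hT, rfl⟩ := hu
  refine ⟨(l.map (·⁻¹)).reverse, by simpa using hl, ?_, (List.prod_inv_reverse l).symm⟩
  intro a ha
  simp only [List.mem_reverse, List.mem_map] at ha
  obtain ⟨b, hb, rfl⟩ := ha
  exact hTsymm b (hT b hb)

lemma finite_ball {T : Set G} (hT : T.Finite) : ∀ n, (ball T n).Finite
  | 0 => Set.Finite.subset (Set.finite_singleton 1) (by
      rintro g ⟨l, hl, _, rfl⟩
      have : l = [] := List.length_eq_zero_iff.mp (Nat.le_zero.mp hl)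
      simp [this])
  | (n + 1) => by
      have hsub : ball T (n + 1) ⊆ ball T n ∪ Set.image2 (· * ·) T (ball T n) := by
        rintro g ⟨l, hl, hTl, rfl⟩
        match l with
        | [] => exact Or.inl (one_mem_ball T n)
        | a :: l' =>
          refine Or.inr ⟨a, hTl a (by simp), l'.prod, ⟨l', ?_, ?_, rfl⟩, by simp⟩
          · simpa using hl
          · exact fun b hb => hTl b (by simp [hb])
      exact ((finite_ball hT n).union (hT.image2 _ (finite_ball hT n))).subset hsub

lemma exists_mem_ball {S : Set G} (hS : Subgroup.closure S = ⊤) (g : G) :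
    ∃ n, g ∈ ball (S ∪ S⁻¹) n := by
  have hg : g ∈ Submonoid.closure (S ∪ S⁻¹) := by
    rw [← Subgroup.closure_toSubmonoid]
    have : g ∈ Subgroup.closure S := by rw [hS]; trivial
    exact this
  obtain ⟨l, hl, rfl⟩ := Submonoid.exists_list_of_mem_closure hg
  exact ⟨l.length, l, le_rfl, hl, rfl⟩

/-- the shift action of `G` on `G → C`. -/
instance shiftAction (C : Type*) : MulAction G (G → C) where
  smul g z := fun u => z (u * g)
  one_smul z := funext fun u => by show z (u * 1) = z u; rw [mul_one]
  mul_smul g h z := funext fun u => by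
    show z (u * (g * h)) = z (u * g * h)
    rw [mul_assoc]

lemma smul_apply {C : Type*} (g : G) (z : G → C) (u : G) : (g • z) u = z (u * g) := rfl

lemma finiteIndex_stab {C : Type*} (z : G → C) (h : (MulAction.orbit G z).Finite) :
    (MulAction.stabilizer G z).FiniteIndex := by
  haveI : Finite (MulAction.orbit G z) := h
  haveI : Finite (G ⧸ MulAction.stabilizer G z) :=
    Finite.of_equiv _ (MulAction.orbitEquivQuotientStabilizer G z)
  exact Subgroup.finiteIndex_of_finite_quotient

lemma ultra_pigeon {α β : Type*} (U : Ultrafilter α) {s : Set β} (hs : s.Finite)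
    {g : α → β} (h : ∀ᶠ a in U, g a ∈ s) : ∃ b, ∀ᶠ a in U, g a = b := by
  have hmem : (⋃ b ∈ s, g ⁻¹' {b}) ∈ U := by
    filter_upwards [h] with a ha
    exact Set.mem_biUnion ha rfl
  obtain ⟨b, _, hb⟩ := (Ultrafilter.finite_biUnion_mem_iff hs).mp hmem
  exact ⟨b, hb⟩

lemma ultra_pigeon' {α β : Type*} [Finite β] (U : Ultrafilter α) (g : α → β) :
    ∃ b, ∀ᶠ a in U, g a = b :=
  ultra_pigeon U Set.finite_univ (Eventually.of_forall fun _ => Set.mem_univ _)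

lemma exists_collision {β : Type*} [Finite β] (f : Fin (Nat.card β + 1) → β) :
    ∃ i j : Fin (Nat.card β + 1), i < j ∧ f i = f j := by
  cases nonempty_fintype β
  obtain ⟨i, j, hne, heq⟩ := Fintype.exists_ne_map_eq_of_card_lt f
    (by simp [Nat.card_eq_fintype_card])
  rcases lt_or_gt_of_ne hne with h | h
  exacts [⟨i, j, h, heq⟩, ⟨j, i, h, heq.symm⟩]


theorem core {G : Type*} [Group G] {C : Type*} [Finite C] [TopologicalSpace C]
    [DiscreteTopology C]
    (S : Set G) (hSfin : S.Finite) (hS : Subgroup.closure S = ⊤)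
    (Z : Set (G → C)) (hZc : IsCompact Z)
    (hZinv : ∀ (g : G), ∀ z ∈ Z, (g • z : G → C) ∈ Z)
    (horb : ∀ z ∈ Z, (MulAction.orbit G z).Finite) :
    Z.Finite := by
  classical
  by_contra hinf
  -- Step 1: Z has an accumulation point
  have hacc : ∃ z ∈ Z, (𝓝[≠] z ⊓ 𝓟 Z).NeBot := by
    by_contra hno
    push_neg at hno
    have hnbhd : ∀ z : G → C, ∃ U, U ∈ 𝓝 z ∧ (z ∈ Z → U ∩ Z ⊆ {z}) := by
      intro z
      by_cases hz : z ∈ Z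
      · have hb : 𝓝[≠] z ⊓ 𝓟 Z = ⊥ := hno z hz
        rw [inf_principal_eq_bot] at hb
        rw [mem_nhdsWithin] at hb
        obtain ⟨U, hUo, hzU, hU⟩ := hb
        refine ⟨U, hUo.mem_nhds hzU, fun _ => ?_⟩
        rintro w ⟨hwU, hwZ⟩
        by_contra hne
        exact hU ⟨hwU, hne⟩ hwZ
      · exact ⟨univ, univ_mem, fun h => absurd h hz⟩
    choose Uf hU1 hU2 using hnbhd
    obtain ⟨t, htZ, hcov⟩ := hZc.elim_nhds_subcover Uf (fun z _ => hU1 z)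
    apply hinf
    refine t.finite_toSet.subset ?_
    intro w hw
    obtain ⟨z, hz, hwz⟩ := Set.mem_iUnion₂.mp (hcov hw)
    have := hU2 z (htZ z hz) ⟨hwz, hw⟩
    simpa using this ▸ hz
  obtain ⟨z, hzZ, hne⟩ := hacc
  haveI := hne
  -- Step 2: the ultrafilter
  set F := 𝓝[≠] z ⊓ 𝓟 Z with hF
  let U : Ultrafilter (G → C) := Ultrafilter.of F
  have hUF : ↑U ≤ F := Ultrafilter.of_le F
  have hUnhds : ↑U ≤ 𝓝 z := hUF.trans ((inf_le_left).trans nhdsWithin_le_nhds)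
  have hUZ : ∀ᶠ w in U, w ∈ Z := hUF (by
    rw [hF]
    exact mem_inf_of_right (mem_principal_self Z))
  have hUne : ∀ᶠ w in U, w ≠ z := by
    have hsub : F ≤ 𝓟 ({z}ᶜ) := le_trans inf_le_left (by rw [nhdsWithin]; exact inf_le_right)
    have h2 : ∀ᶠ w in U, w ∈ ({z}ᶜ : Set (G → C)) := hUF (hsub (mem_principal_self _))
    exact h2.mono fun w hw => hw
  -- Step 3: word-length balls
  set T : Set G := S ∪ S⁻¹ with hT
  have hTfin : T.Finite := hSfin.union hSfin.inv
  have hTsymm : ∀ a ∈ T, a⁻¹ ∈ T := by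
    rintro a (ha | ha)
    · exact Or.inr (Set.inv_mem_inv.mpr ha)
    · exact Or.inl (Set.mem_inv.mp ha)
  have hcover : ∀ g : G, ∃ n, g ∈ ball T n := exists_mem_ball hS
  -- Step 4: the first disagreement selectors
  let P : (G → C) → ℕ → Prop := fun w n => ∃ x ∈ ball T n, w x ≠ z x
  have hPex : ∀ w, w ≠ z → ∃ n, P w n := by
    intro w hw
    have hx : ∃ x, w x ≠ z x := by
      by_contra h; push_neg at h; exact hw (funext h)
    obtain ⟨x, hx⟩ := hx
    obtain ⟨n, hn⟩ := hcover x
    exact ⟨n, x, hn, hx⟩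
  let d : (G → C) → ℕ := fun w => if h : ∃ n, P w n then Nat.find h else 0
  have hdP : ∀ w, w ≠ z → P w (d w) := by
    intro w hw
    have h := hPex w hw
    simp only [d, dif_pos h]
    exact Nat.find_spec h
  have hdmin : ∀ w, w ≠ z → ∀ m, m < d w → ∀ x ∈ ball T m, w x = z x := by
    intro w hw m hm x hx
    have h := hPex w hw
    simp only [d, dif_pos h] at hm
    by_contra hne
    exact Nat.find_min h hm ⟨x, hx, hne⟩
  let xsel : (G → C) → G := fun w => if h : P w (d w) then h.choose else 1
  have hxsel : ∀ w, w ≠ z → xsel w ∈ ball T (d w) ∧ w (xsel w) ≠ z (xsel w) := by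
    intro w hw
    have h := hdP w hw
    simp only [xsel, dif_pos h]
    exact ⟨h.choose_spec.1, h.choose_spec.2⟩
  have hdlarge : ∀ r : ℕ, ∀ᶠ w in U, w ≠ z → r < d w := by
    intro r
    have hNopen : IsOpen {w : G → C | ∀ x ∈ ball T r, w x = z x} := by
      have heq : {w : G → C | ∀ x ∈ ball T r, w x = z x}
          = ⋂ x ∈ ball T r, (fun w : G → C => w x) ⁻¹' {z x} := by
        ext w; simp
      rw [heq]
      exact (finite_ball hTfin r).isOpen_biInter fun x _ =>
        (isOpen_discrete _).preimage (continuous_apply x)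
    have hmem : {w : G → C | ∀ x ∈ ball T r, w x = z x} ∈ 𝓝 z :=
      hNopen.mem_nhds (by simp)
    filter_upwards [hUnhds hmem] with w hw hwne
    by_contra hle
    push_neg at hle
    have hx := hxsel w hwne
    exact hx.2 (hw _ (ball_mono hle hx.1))
  -- Step 5: coset selection for the stabilizer of z
  haveI hfi1 : (MulAction.stabilizer G z).FiniteIndex := finiteIndex_stab z (horb z hzZ)
  obtain ⟨γ, hγ⟩ := ultra_pigeon' U
    (fun w => (QuotientGroup.mk (xsel w) : G ⧸ MulAction.stabilizer G z))
  obtain ⟨c, hcγ⟩ := Quotient.exists_rep γ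
  have hcη : ∀ᶠ w in U, c⁻¹ * xsel w ∈ MulAction.stabilizer G z := by
    filter_upwards [hγ] with w hw
    have heq : (QuotientGroup.mk c : G ⧸ MulAction.stabilizer G z) = QuotientGroup.mk (xsel w) := by
      rw [hw]; exact hcγ
    exact QuotientGroup.eq.mp heq
  have hC1 : ∀ w, c⁻¹ * xsel w ∈ MulAction.stabilizer G z →
      ∀ h : G, z (h * xsel w) = z (h * c) := by
    intro w hη h
    have hz' : (c⁻¹ * xsel w) • z = z := MulAction.mem_stabilizer_iff.mp hη
    have e1 : h * xsel w = (h * c) * (c⁻¹ * xsel w) := by group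
    rw [e1]
    have e2 : z ((h * c) * (c⁻¹ * xsel w)) = ((c⁻¹ * xsel w) • z) (h * c) := rfl
    rw [e2, hz']
  -- Step 6: the value b
  obtain ⟨b, hb⟩ := ultra_pigeon' U (fun w => w (xsel w))
  have hbne : b ≠ z c := by
    obtain ⟨w, hwb, hwne, hwη⟩ := (hb.and (hUne.and hcη)).exists
    have h1 : z (xsel w) = z c := by
      have := hC1 w hwη 1
      rwa [one_mul, one_mul] at this
    rw [← hwb, ← h1]
    exact (hxsel w hwne).2
  -- Step 7: the limit y
  let ψ : (G → C) → (G → C) := fun w => (xsel w) • w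
  have hψZ : Z ∈ U.map ψ := by
    have : ∀ᶠ w in U, ψ w ∈ Z := by
      filter_upwards [hUZ] with w hw
      exact hZinv (xsel w) w hw
    rw [Ultrafilter.mem_map]
    exact this
  obtain ⟨y, hyZ, hyU⟩ := hZc.ultrafilter_le_nhds (U.map ψ) (le_principal_iff.mpr hψZ)
  have hψt : Tendsto ψ (↑U) (𝓝 y) := by
    rw [Filter.Tendsto, ← Ultrafilter.coe_map]; exact hyU
  have hEv : ∀ κ : G, ∀ᶠ (w : G → C) in U, w (κ * xsel w) = y κ := by
    intro κ
    have h1 : Tendsto (fun w => ψ w κ) (↑U) (𝓝 (y κ)) :=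
      ((continuous_apply κ).tendsto y).comp hψt
    have h2 : ∀ᶠ (w : G → C) in U, ψ w κ ∈ ({y κ} : Set C) :=
      h1 ((isOpen_discrete {y κ}).mem_nhds rfl)
    exact h2.mono fun w hw => hw
  -- Step 8: the subgroup K
  let z' : G → C := c • z
  have hz'Z : z' ∈ Z := hZinv c z hzZ
  haveI hfy : (MulAction.stabilizer G y).FiniteIndex := finiteIndex_stab y (horb y hyZ)
  haveI hfz' : (MulAction.stabilizer G z').FiniteIndex := finiteIndex_stab z' (horb z' hz'Z)
  set K : Subgroup G := MulAction.stabilizer G y ⊓ MulAction.stabilizer G z' with hK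
  haveI : Finite (G ⧸ K) := Subgroup.finite_quotient_of_finiteIndex
  set q := Nat.card (G ⧸ K) with hq
  -- Step 9: the collision elements
  let good : (G → C) → Prop := fun w =>
    ∃ κ : G, κ ∈ ball T (q + q) ∧ κ ∈ K ∧ w (κ * xsel w) = z' κ
  have hgood : ∀ᶠ w in U, good w := by
    filter_upwards [hUne, hcη, hdlarge (q + q + 1)] with w hwne hwη hwd
    have hwd : q + q + 1 < d w := hwd hwne
    obtain ⟨hxmem, -⟩ := hxsel w hwne
    obtain ⟨l, hllen, hlT, hlprod⟩ := hxmem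
    obtain ⟨i, j, hij, hcol⟩ := exists_collision
      (fun i : Fin (Nat.card (G ⧸ K) + 1) => (QuotientGroup.mk ((l.take (i : ℕ)).prod)⁻¹ : G ⧸ K))
    set pi := (l.take (i : ℕ)).prod with hpi_def
    set pj := (l.take (j : ℕ)).prod with hpj_def
    have hκK : pi * pj⁻¹ ∈ K := by
      have h := QuotientGroup.eq.mp hcol
      simpa using h
    have hpi : pi ∈ ball T (i : ℕ) :=
      ⟨l.take (i : ℕ), by rw [List.length_take]; exact min_le_left _ _,
        fun a ha => hlT a (List.take_subset _ _ ha), rfl⟩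
    have hpj : pj ∈ ball T (j : ℕ) :=
      ⟨l.take (j : ℕ), by rw [List.length_take]; exact min_le_left _ _,
        fun a ha => hlT a (List.take_subset _ _ ha), rfl⟩
    have hκball : pi * pj⁻¹ ∈ ball T (q + q) := by
      refine ball_mono ?_ (mul_mem_ball hpi (inv_mem_ball hTsymm hpj))
      have h1 : (i : ℕ) ≤ q := i.is_le
      have h2 : (j : ℕ) ≤ q := j.is_le
      omega
    have hsplit : pj * (l.drop (j : ℕ)).prod = xsel w := by
      rw [hpj_def, ← List.prod_append, List.take_append_drop, hlprod]
    have hdrop : (l.drop (j : ℕ)).prod ∈ ball T (l.length - (j : ℕ)) :=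
      ⟨l.drop (j : ℕ), by rw [List.length_drop],
        fun a ha => hlT a (List.drop_subset _ _ ha), rfl⟩
    have hcomb : (pi * pj⁻¹) * xsel w = pi * (l.drop (j : ℕ)).prod := by
      rw [← hsplit]; group
    have hmem2 : (pi * pj⁻¹) * xsel w ∈ ball T ((i : ℕ) + (l.length - (j : ℕ))) := by
      rw [hcomb]; exact mul_mem_ball hpi hdrop
    have hlt : (i : ℕ) + (l.length - (j : ℕ)) < d w := by
      have h1 : (i : ℕ) < (j : ℕ) := hij
      have h2 : (j : ℕ) ≤ q := j.is_le
      have h3 : (i : ℕ) ≤ q := i.is_le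
      omega
    have heq1 : w ((pi * pj⁻¹) * xsel w) = z ((pi * pj⁻¹) * xsel w) :=
      hdmin w hwne _ hlt _ hmem2
    have heq2 : z ((pi * pj⁻¹) * xsel w) = z ((pi * pj⁻¹) * c) := hC1 w hwη _
    exact ⟨pi * pj⁻¹, hκball, hκK, by rw [heq1, heq2]; rfl⟩
  let κf : (G → C) → G := fun w => if h : good w then h.choose else 1
  have hκf : ∀ᶠ (w : G → C) in U, κf w ∈ K ∧ w (κf w * xsel w) = z' (κf w) ∧ κf w ∈ ball T (q + q) := by
    filter_upwards [hgood] with w hw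
    simp only [κf, dif_pos hw]
    exact ⟨hw.choose_spec.2.1, hw.choose_spec.2.2, hw.choose_spec.1⟩
  obtain ⟨κ₀, hκ₀⟩ := ultra_pigeon U (finite_ball hTfin (q + q))
    (g := κf) (hκf.mono fun w hw => hw.2.2)
  -- Step 10: contradiction
  have hy1 : y 1 = b := by
    obtain ⟨w, h1, h2⟩ := ((hEv 1).and hb).exists
    rw [← h1, one_mul, h2]
  obtain ⟨w, hEvw, hκfw, hκeq⟩ := ((hEv κ₀).and (hκf.and hκ₀)).exists
  have hκ₀K : κ₀ ∈ K := hκeq ▸ hκfw.1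
  have hyκ : y κ₀ = z' κ₀ := by
    rw [← hEvw, ← hκeq]
    exact hκfw.2.1
  have hsy : κ₀ • y = y := MulAction.mem_stabilizer_iff.mp (Subgroup.mem_inf.mp hκ₀K).1
  have hsz : κ₀ • z' = z' := MulAction.mem_stabilizer_iff.mp (Subgroup.mem_inf.mp hκ₀K).2
  have hy2 : y κ₀ = y 1 := by
    conv_rhs => rw [← hsy]
    show y κ₀ = y (1 * κ₀)
    rw [one_mul]
  have hz2 : z' κ₀ = z' 1 := by
    conv_rhs => rw [← hsz]
    show z' κ₀ = z' (1 * κ₀)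
    rw [one_mul]
  have hz3 : z' 1 = z c := by
    show z (1 * c) = z c
    rw [one_mul]
  exact hbne (by rw [← hy1, ← hy2, hyκ, hz2, hz3])

end Stmt13Aux

set_option synthInstance.maxHeartbeats 1000000 in
open Stmt13Aux Filter Set Topology in
theorem stmt_13 {G X : Type*} [Group G] [Group.FG G] [MetricSpace X] [CompactSpace X]
    [TotallyDisconnectedSpace X]
    [MulAction G X] (hc : ∀ g : G, Continuous fun x : X => g • x)
    (hpp : ∀ x : X, (MulAction.orbit G x).Finite) :
    ∀ ε > (0 : ℝ), ∃ δ > (0 : ℝ), ∀ x y : X, dist x y < δ →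
      ∀ g : G, dist (g • x) (g • y) < ε := by
  intro ε hε
  classical
  -- small clopen neighborhoods
  have hV : ∀ x : X, ∃ V : Set X, IsClopen V ∧ x ∈ V ∧ V ⊆ Metric.ball x (ε / 2) := fun x =>
    compact_exists_isClopen_in_isOpen Metric.isOpen_ball (Metric.mem_ball_self (by linarith))
  choose V hVc hVm hVs using hV
  obtain ⟨t, -, hcov⟩ := isCompact_univ.elim_nhds_subcover V
    (fun x _ => (hVc x).isOpen.mem_nhds (hVm x))
  let Cc := ({x // x ∈ t} → Bool)
  let f : X → Cc := fun u i => (V i.1).boolIndicator u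
  have hfc : Continuous f := continuous_pi fun i =>
    (continuous_boolIndicator_iff_isClopen _).mpr (hVc i.1)
  have hfsmall : ∀ u v : X, f u = f v → dist u v < ε := by
    intro u v huv
    obtain ⟨x, hxt, hxu⟩ : ∃ x ∈ t, u ∈ V x := by
      have h := hcov (mem_univ u)
      simpa using h
    have hxv : v ∈ V x := by
      have h1 := congrFun huv ⟨x, hxt⟩
      have h2 : (V x).boolIndicator u = true := (Set.mem_iff_boolIndicator _ _).mp hxu
      have h3 : (V x).boolIndicator v = true := by
        rw [show (V x).boolIndicator v = f v ⟨x, hxt⟩ from rfl, ← h1]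
        exact h2
      exact (Set.mem_iff_boolIndicator _ _).mpr h3
    have hu : dist u x < ε / 2 := by
      have := hVs x hxu; rwa [Metric.mem_ball] at this
    have hv : dist v x < ε / 2 := by
      have := hVs x hxv; rwa [Metric.mem_ball] at this
    calc dist u v ≤ dist u x + dist v x := dist_triangle_right u v x
      _ < ε / 2 + ε / 2 := by linarith
      _ = ε := by ring
  -- the symbolic map
  letI : MulAction G (G → Cc) := Stmt13Aux.shiftAction Cc
  let Φ : X → (G → Cc) := fun ξ g => f (g • ξ)
  have hΦc : Continuous Φ := continuous_pi fun g => hfc.comp (hc g)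
  have hequiv : ∀ (g : G) (ξ : X), Φ (g • ξ) = g • Φ ξ := by
    intro g ξ; funext u
    show f (u • g • ξ) = f ((u * g) • ξ)
    rw [mul_smul]
  obtain ⟨S, hScl, hSfin⟩ := Group.fg_iff.mp (inferInstance : Group.FG G)
  have hZfin : (Set.range Φ).Finite := by
    apply core S hSfin hScl (Set.range Φ) (isCompact_range hΦc)
    · rintro g w ⟨ξ, rfl⟩
      exact ⟨g • ξ, hequiv g ξ⟩
    · rintro w ⟨ξ, rfl⟩
      apply Set.Finite.subset ((hpp ξ).image Φ)
      rintro w' hw'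
      obtain ⟨g, hg⟩ := MulAction.mem_orbit_iff.mp hw'
      exact ⟨g • ξ, MulAction.mem_orbit _ _, by rw [hequiv g ξ, hg]⟩
  -- fibers of Φ are open
  have hfiber_closed : ∀ v : G → Cc, IsClosed (Φ ⁻¹' {v}) := fun v =>
    IsClosed.preimage hΦc isClosed_singleton
  have hfiber_open : ∀ v : G → Cc, IsOpen (Φ ⁻¹' {v}) := by
    intro v
    by_cases hv : v ∈ Set.range Φ
    · have heq : Φ ⁻¹' {v} = (⋃ u ∈ (Set.range Φ) \ {v}, Φ ⁻¹' {u})ᶜ := by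
        ext ξ
        simp only [Set.mem_preimage, Set.mem_singleton_iff, Set.mem_compl_iff,
          Set.mem_iUnion, Set.mem_diff, exists_prop]
        constructor
        · rintro h ⟨u, ⟨-, hune⟩, hΦu⟩
          exact hune (by rw [← hΦu, h])
        · intro h
          by_contra hne
          exact h ⟨Φ ξ, ⟨Set.mem_range_self ξ, hne⟩, rfl⟩
      rw [heq]
      exact (Set.Finite.isClosed_biUnion hZfin.diff
        (fun u _ => hfiber_closed u)).isOpen_compl
    · have heq : Φ ⁻¹' {v} = ∅ := by
        ext ξ
        simp only [Set.mem_preimage, Set.mem_singleton_iff, Set.mem_empty_iff_false, iff_false]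
        intro h
        exact hv ⟨ξ, h⟩
      rw [heq]
      exact isOpen_empty
  -- Lebesgue number lemma
  obtain ⟨δ, hδpos, hδ⟩ := lebesgue_number_lemma_of_metric (isCompact_univ (X := X))
    hfiber_open (fun ξ _ => Set.mem_iUnion.mpr ⟨Φ ξ, rfl⟩)
  refine ⟨δ, hδpos, ?_⟩
  intro x y hxy g
  obtain ⟨v, hball⟩ := hδ x (mem_univ x)
  have hx : Φ x = v := hball (Metric.mem_ball_self hδpos)
  have hy : Φ y = v := hball (by rw [Metric.mem_ball, dist_comm]; exact hxy)
  have hfg : f (g • x) = f (g • y) := congrFun (hx.trans hy.symm) g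
  exact hfsmall _ _ hfg
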